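/- Let g be a Lie algebra over a commutative ring k and X = k⊕g with the comultiplication Δ(a,x) = (a,x)⊗(1,0) + (1,0)⊗(0,x) and counit ε(a,x) = a. Then (X,Δ,ε) is a coassociative counital coalgebra, and q((a,x)⊗(b,y)) = (ab, bx+[x,y]) is a coalgebra morphism: Δ∘q = (q⊗q)∘(1⊗τ⊗1)∘(Δ⊗Δ) and ε∘q = ε⊗ε (under the identification k⊗k ≅ k), where τ is the flip on X⊗X. -/

import Mathlib

open TensorProduct

noncomputable section

variable (k : Type*) [CommRing k] (L : Type*) [LieRing L] [LieAlgebra k L]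

abbrev X := k × L

/-- The self-distributive operation `q((a,x)⊗(b,y)) = (ab, b•x + ⁅x,y⁆)` as a bilinear map. -/
def qc : X k L →ₗ[k] X k L →ₗ[k] X k L :=
  LinearMap.mk₂ k (fun u v => (u.1 * v.1, v.1 • u.2 + ⁅u.2, v.2⁆))
    (fun m₁ m₂ n => by
      simp only [Prod.fst_add, Prod.snd_add, Prod.mk_add_mk, Prod.mk.injEq]
      exact ⟨by ring, by rw [smul_add, add_lie]; abel⟩)
    (fun c m n => by
      simp only [Prod.smul_fst, Prod.smul_snd, Prod.smul_mk, smul_eq_mul, Prod.mk.injEq]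
      exact ⟨by ring, by rw [smul_lie, smul_comm n.1 c, smul_add]⟩)
    (fun m n₁ n₂ => by
      simp only [Prod.fst_add, Prod.snd_add, Prod.mk_add_mk, Prod.mk.injEq]
      exact ⟨by ring, by rw [add_smul, lie_add]; abel⟩)
    (fun c m n => by
      simp only [Prod.smul_fst, Prod.smul_snd, Prod.smul_mk, smul_eq_mul, Prod.mk.injEq]
      exact ⟨by ring, by rw [lie_smul, smul_add, mul_smul]⟩)

/-- The comultiplication `Δ(a,x) = (a,x)⊗(1,0) + (1,0)⊗(0,x)`. -/
def Delta : X k L →ₗ[k] X k L ⊗[k] X k L where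
  toFun u := u ⊗ₜ (1, 0) + (1, 0) ⊗ₜ ((0 : k), u.2)
  map_add' u v := by
    try dsimp only
    rw [show ((0 : k), (u + v).2) = ((0 : k), u.2) + ((0 : k), v.2) by
      simp [Prod.mk_add_mk]]
    rw [add_tmul, tmul_add]; abel
  map_smul' c u := by
    try dsimp only
    rw [show ((0 : k), (c • u).2) = c • ((0 : k), u.2) by simp [Prod.smul_mk],
      tmul_smul]
    simp [smul_add, smul_tmul']

/-- The counit `ε(a,x) = a`. -/
def eps : X k L →ₗ[k] k := LinearMap.fst k k L

/-- The Yang-Baxter operator `R(u ⊗ v) = v^{(1)} ⊗ q(u ⊗ v^{(2)})` associated to the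
Lie algebra `L`. -/
def Rop : X k L ⊗[k] X k L →ₗ[k] X k L ⊗[k] X k L :=
  TensorProduct.lift <| LinearMap.mk₂ k
    (fun u v => (LinearMap.lTensor (X k L) (qc k L u)) (Delta k L v))
    (fun u₁ u₂ v => by simp [map_add, LinearMap.lTensor_add, LinearMap.add_apply])
    (fun c u v => by simp [map_smul, LinearMap.lTensor_smul, LinearMap.smul_apply])
    (fun u v₁ v₂ => by simp)
    (fun c u v => by simp)

variable {k}

/-- `F ⊗ 1` acting on the first two factors of `V ⊗ (V ⊗ V)`. -/
def map12 {V : Type*} [AddCommGroup V] [Module k V]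
    (F : V ⊗[k] V →ₗ[k] V ⊗[k] V) :
    V ⊗[k] (V ⊗[k] V) →ₗ[k] V ⊗[k] (V ⊗[k] V) :=
  (TensorProduct.assoc k V V V).toLinearMap ∘ₗ F.rTensor V ∘ₗ
    (TensorProduct.assoc k V V V).symm.toLinearMap

/-- `1 ⊗ F` acting on the last two factors of `V ⊗ (V ⊗ V)`. -/
def map23 {V : Type*} [AddCommGroup V] [Module k V]
    (F : V ⊗[k] V →ₗ[k] V ⊗[k] V) :
    V ⊗[k] (V ⊗[k] V) →ₗ[k] V ⊗[k] (V ⊗[k] V) :=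
  F.lTensor V

/-- The Yang-Baxter equation for an operator `F : V ⊗ V → V ⊗ V`. -/
def YBE {V : Type*} [AddCommGroup V] [Module k V]
    (F : V ⊗[k] V →ₗ[k] V ⊗[k] V) : Prop :=
  map12 F ∘ₗ map23 F ∘ₗ map12 F = map23 F ∘ₗ map12 F ∘ₗ map23 F

/-- The second Yang-Baxter differential. -/
def dYB {V : Type*} [AddCommGroup V] [Module k V]
    (R φ : V ⊗[k] V →ₗ[k] V ⊗[k] V) :
    V ⊗[k] (V ⊗[k] V) →ₗ[k] V ⊗[k] (V ⊗[k] V) :=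
  map12 R ∘ₗ map23 R ∘ₗ map12 φ + map12 R ∘ₗ map23 φ ∘ₗ map12 R +
    map12 φ ∘ₗ map23 R ∘ₗ map12 R - map23 R ∘ₗ map12 R ∘ₗ map23 φ -
    map23 R ∘ₗ map12 φ ∘ₗ map23 R - map23 φ ∘ₗ map12 R ∘ₗ map23 R

/-- The first Yang-Baxter differential. -/
def dYB1 {V : Type*} [AddCommGroup V] [Module k V]
    (R : V ⊗[k] V →ₗ[k] V ⊗[k] V) (f : V →ₗ[k] V) :
    V ⊗[k] V →ₗ[k] V ⊗[k] V :=
  R ∘ₗ f.rTensor V + R ∘ₗ f.lTensor V - f.rTensor V ∘ₗ R - f.lTensor V ∘ₗ R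

end

open TensorProduct

/-- `X = k ⊕ g` with `Δ(a,x) = (a,x)⊗(1,0) + (1,0)⊗(0,x)` and `ε(a,x) = a` is a
coassociative counital coalgebra, and `q((a,x)⊗(b,y)) = (ab, b•x + ⁅x,y⁆)` is a
morphism of coalgebras. -/
theorem X_coalgebra_and_q_morphism (k : Type*) [CommRing k] (L : Type*) [LieRing L]
    [LieAlgebra k L] :
    (TensorProduct.assoc k (X k L) (X k L) (X k L)).toLinearMap ∘ₗ
        (Delta k L).rTensor (X k L) ∘ₗ Delta k L =
      (Delta k L).lTensor (X k L) ∘ₗ Delta k L ∧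
    (TensorProduct.lid k (X k L)).toLinearMap ∘ₗ
        (eps k L).rTensor (X k L) ∘ₗ Delta k L = LinearMap.id ∧
    (TensorProduct.rid k (X k L)).toLinearMap ∘ₗ
        (eps k L).lTensor (X k L) ∘ₗ Delta k L = LinearMap.id ∧
    Delta k L ∘ₗ TensorProduct.lift (qc k L) =
      TensorProduct.map (TensorProduct.lift (qc k L)) (TensorProduct.lift (qc k L)) ∘ₗ
        (TensorProduct.tensorTensorTensorComm k (X k L) (X k L) (X k L)
          (X k L)).toLinearMap ∘ₗ
        TensorProduct.map (Delta k L) (Delta k L) ∧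
    eps k L ∘ₗ TensorProduct.lift (qc k L) =
      LinearMap.mul' k k ∘ₗ TensorProduct.map (eps k L) (eps k L) := by
  refine ⟨?_, ?_, ?_, ?_, ?_⟩
  · apply LinearMap.ext; intro u
    simp [Delta, tmul_add, add_tmul, Prod.mk_zero_zero]
    abel
  · apply LinearMap.ext; intro u
    simp [Delta, eps]
  · apply LinearMap.ext; intro u
    simp [Delta, eps]
  · apply TensorProduct.ext'; intro u v
    simp [Delta, qc, tmul_add, add_tmul, Prod.mk_zero_zero]
    rw [show ((0 : k), v.1 • u.2 + ⁅u.2, v.2⁆) =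
        ((0 : k), v.1 • u.2) + ((0 : k), ⁅u.2, v.2⁆) by simp,
      tmul_add,
      show ((0 : k), v.1 • u.2) = v.1 • ((0 : k), u.2) by simp,
      tmul_smul, smul_tmul',
      show v.1 • ((1 : k), (0 : L)) = ((v.1, 0) : X k L) by simp]
    abel
  · apply TensorProduct.ext'; intro u v
    simp [qc, eps]
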